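/- There exists a set A ⊆ ℕ such that A + A = ℕ and for every ε > 0, σ_A(N)/N^ε → 0 as N → ∞. -/

import Mathlib

open Filter Finset

namespace Stmt12

/-- inclusion probability -/
noncomputable def pr (n : ℕ) : ℝ :=
  if n < 600 then 1 else min 1 (30 * Real.sqrt (Real.log (n+2) / (n+2)))

/-- indicator -/
def X (i : ℕ) (s : Finset ℕ) : ℝ := if i ∈ s then 1 else 0

/-- cube weight -/
noncomputable def cw (m : ℕ) (s : Finset ℕ) : ℝ :=
  ∏ i ∈ Finset.range m, (if i ∈ s then pr i else 1 - pr i)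

/-- expectation over the cube of subsets of range m -/
noncomputable def E (m : ℕ) (f : Finset ℕ → ℝ) : ℝ :=
  ∑ s ∈ (Finset.range m).powerset, cw m s * f s

lemma sqrt_log_nonneg (n : ℕ) : 0 ≤ 30 * Real.sqrt (Real.log (n+2) / (n+2)) := by
  positivity

lemma pr_nonneg (n : ℕ) : 0 ≤ pr n := by
  unfold pr; split
  · norm_num
  · exact le_min (by norm_num) (sqrt_log_nonneg n)

lemma pr_le_one (n : ℕ) : pr n ≤ 1 := by
  unfold pr; split
  · exact le_refl 1
  · exact min_le_left _ _

lemma cw_nonneg (m : ℕ) (s : Finset ℕ) : 0 ≤ cw m s := by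
  refine Finset.prod_nonneg fun i _ => ?_
  split
  · exact pr_nonneg i
  · linarith [pr_le_one i]

/-- the core distributivity identity -/
lemma sum_powerset_prod (u : Finset ℕ) (Ht Hf : ℕ → ℝ) :
    ∑ s ∈ u.powerset, ∏ i ∈ u, (if i ∈ s then Ht i else Hf i)
      = ∏ i ∈ u, (Ht i + Hf i) := by
  classical
  induction u using Finset.induction_on with
  | empty => simp
  | insert a u' ha ih =>
    rw [Finset.sum_powerset_insert ha]
    have h1 : ∀ s ∈ u'.powerset,
        ∏ i ∈ insert a u', (if i ∈ s then Ht i else Hf i)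
          = Hf a * ∏ i ∈ u', (if i ∈ s then Ht i else Hf i) := by
      intro s hs
      rw [Finset.prod_insert ha]
      have : a ∉ s := fun h => ha (Finset.mem_powerset.1 hs h)
      simp [this]
    have h2 : ∀ s ∈ u'.powerset,
        ∏ i ∈ insert a u', (if i ∈ insert a s then Ht i else Hf i)
          = Ht a * ∏ i ∈ u', (if i ∈ s then Ht i else Hf i) := by
      intro s hs
      rw [Finset.prod_insert ha]
      simp only [Finset.mem_insert_self, if_true]
      congr 1
      refine Finset.prod_congr rfl fun i hi => ?_
      have hia : i ≠ a := fun h => ha (h ▸ hi)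
      simp [Finset.mem_insert, hia]
    rw [Finset.sum_congr rfl h1, Finset.sum_congr rfl h2, ← Finset.mul_sum, ← Finset.mul_sum, ih,
      Finset.prod_insert ha]
    ring

lemma E_one (m : ℕ) : E m (fun _ => 1) = 1 := by
  unfold E cw
  simp only [mul_one]
  rw [sum_powerset_prod (Finset.range m) pr (fun i => 1 - pr i)]
  refine Finset.prod_eq_one fun i _ => by ring

lemma E_mono (m : ℕ) {f g : Finset ℕ → ℝ} (h : ∀ s, s ⊆ Finset.range m → f s ≤ g s) :
    E m f ≤ E m g := by
  refine Finset.sum_le_sum fun s hs => ?_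
  exact mul_le_mul_of_nonneg_left (h s (Finset.mem_powerset.1 hs)) (cw_nonneg m s)

lemma E_nonneg (m : ℕ) {f : Finset ℕ → ℝ} (h : ∀ s, 0 ≤ f s) : 0 ≤ E m f := by
  refine Finset.sum_nonneg fun s _ => mul_nonneg (cw_nonneg m s) (h s)

lemma E_sum (m : ℕ) {ι : Type*} (T : Finset ι) (g : ι → Finset ℕ → ℝ) :
    E m (fun s => ∑ t ∈ T, g t s) = ∑ t ∈ T, E m (g t) := by
  unfold E
  simp only [Finset.mul_sum]
  exact Finset.sum_comm

lemma E_const_mul (m : ℕ) (c : ℝ) (f : Finset ℕ → ℝ) :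
    E m (fun s => c * f s) = c * E m f := by
  unfold E
  rw [Finset.mul_sum]
  refine Finset.sum_congr rfl fun s _ => by ring

/-- expectation of a monomial -/
lemma E_monomial (m : ℕ) (S : Finset ℕ) (hS : S ⊆ Finset.range m) :
    E m (fun s => ∏ i ∈ S, X i s) = ∏ i ∈ S, pr i := by
  unfold E cw X
  have key : ∀ s : Finset ℕ,
      (∏ i ∈ Finset.range m, (if i ∈ s then pr i else 1 - pr i)) *
        (∏ i ∈ S, (if i ∈ s then (1:ℝ) else 0))
      = ∏ i ∈ Finset.range m, (if i ∈ s then pr i else (if i ∈ S then 0 else 1 - pr i)) := by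
    intro s
    have hext : (∏ i ∈ S, (if i ∈ s then (1:ℝ) else 0))
        = ∏ i ∈ Finset.range m, (if i ∈ S then (if i ∈ s then (1:ℝ) else 0) else 1) := by
      rw [Finset.prod_ite_mem (Finset.range m) S (fun i => if i ∈ s then (1:ℝ) else 0),
        Finset.inter_eq_right.2 hS]
    rw [hext, ← Finset.prod_mul_distrib]
    refine Finset.prod_congr rfl fun i _ => ?_
    by_cases h1 : i ∈ s <;> by_cases h2 : i ∈ S <;> simp [h1, h2]
  simp only [key]
  rw [sum_powerset_prod (Finset.range m) pr (fun i => if i ∈ S then 0 else 1 - pr i)]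
  have : ∀ i ∈ Finset.range m, (pr i + if i ∈ S then 0 else 1 - pr i)
      = (if i ∈ S then pr i else 1) := by
    intro i _
    by_cases h : i ∈ S <;> simp [h]
  rw [Finset.prod_congr rfl this, Finset.prod_ite_mem (Finset.range m) S pr,
    Finset.inter_eq_right.2 hS]


section Pairs
variable (K : Finset ℕ) (u v : ℕ → ℕ)

lemma pairs_disjoint (huv : ∀ a ∈ K, ∀ b ∈ K, u a ≠ v b) :
    Disjoint (K.image u) (K.image v) := by
  rw [Finset.disjoint_left]
  rintro x hx hy
  obtain ⟨a, ha, rfl⟩ := Finset.mem_image.1 hx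
  obtain ⟨b, hb, hba⟩ := Finset.mem_image.1 hy
  exact huv a ha b hb hba.symm

lemma prod_pairs (hui : ∀ a ∈ K, ∀ b ∈ K, u a = u b → a = b)
    (hvi : ∀ a ∈ K, ∀ b ∈ K, v a = v b → a = b)
    (huv : ∀ a ∈ K, ∀ b ∈ K, u a ≠ v b) (F : ℕ → ℝ) :
    ∏ i ∈ K.image u ∪ K.image v, F i = ∏ a ∈ K, (F (u a) * F (v a)) := by
  rw [Finset.prod_union (pairs_disjoint K u v huv), Finset.prod_image hui,
    Finset.prod_image hvi, ← Finset.prod_mul_distrib]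

lemma E_pairprod (m : ℕ) (α β : ℕ → ℝ)
    (hu : ∀ a ∈ K, u a < m) (hv : ∀ a ∈ K, v a < m)
    (hui : ∀ a ∈ K, ∀ b ∈ K, u a = u b → a = b)
    (hvi : ∀ a ∈ K, ∀ b ∈ K, v a = v b → a = b)
    (huv : ∀ a ∈ K, ∀ b ∈ K, u a ≠ v b) :
    E m (fun s => ∏ a ∈ K, (β a * (X (u a) s * X (v a) s) + α a))
      = ∏ a ∈ K, (β a * (pr (u a) * pr (v a)) + α a) := by
  classical
  have hrw : ∀ s : Finset ℕ,
      (∏ a ∈ K, (β a * (X (u a) s * X (v a) s) + α a))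
        = ∑ t ∈ K.powerset, ((∏ a ∈ t, β a) * (∏ a ∈ K \ t, α a)) *
            ∏ i ∈ t.image u ∪ t.image v, X i s := by
    intro s
    rw [Finset.prod_add]
    refine Finset.sum_congr rfl fun t ht => ?_
    have htK := Finset.mem_powerset.1 ht
    rw [prod_pairs t u v (fun a ha b hb => hui a (htK ha) b (htK hb))
        (fun a ha b hb => hvi a (htK ha) b (htK hb))
        (fun a ha b hb => huv a (htK ha) b (htK hb)) (fun i => X i s),
      Finset.prod_mul_distrib]
    ring
  calc E m (fun s => ∏ a ∈ K, (β a * (X (u a) s * X (v a) s) + α a))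
      = E m (fun s => ∑ t ∈ K.powerset, ((∏ a ∈ t, β a) * (∏ a ∈ K \ t, α a)) *
            ∏ i ∈ t.image u ∪ t.image v, X i s) := by
        congr 1; funext s; exact hrw s
    _ = ∑ t ∈ K.powerset, ((∏ a ∈ t, β a) * (∏ a ∈ K \ t, α a)) *
            ∏ i ∈ t.image u ∪ t.image v, pr i := by
        rw [E_sum]
        refine Finset.sum_congr rfl fun t ht => ?_
        have htK := Finset.mem_powerset.1 ht
        rw [E_const_mul, E_monomial]
        intro i hi
        rcases Finset.mem_union.1 hi with hiu | hiv
        · obtain ⟨a, ha, rfl⟩ := Finset.mem_image.1 hiu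
          exact Finset.mem_range.2 (hu a (htK ha))
        · obtain ⟨a, ha, rfl⟩ := Finset.mem_image.1 hiv
          exact Finset.mem_range.2 (hv a (htK ha))
    _ = ∑ t ∈ K.powerset, (∏ a ∈ t, β a * (pr (u a) * pr (v a))) * (∏ a ∈ K \ t, α a) := by
        refine Finset.sum_congr rfl fun t ht => ?_
        have htK := Finset.mem_powerset.1 ht
        rw [prod_pairs t u v (fun a ha b hb => hui a (htK ha) b (htK hb))
            (fun a ha b hb => hvi a (htK ha) b (htK hb))
            (fun a ha b hb => huv a (htK ha) b (htK hb)) pr]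
        have hmerge : (∏ a ∈ t, β a * (pr (u a) * pr (v a)))
            = (∏ a ∈ t, β a) * ∏ a ∈ t, (pr (u a) * pr (v a)) := Finset.prod_mul_distrib
        rw [hmerge]
        ring
    _ = ∏ a ∈ K, (β a * (pr (u a) * pr (v a)) + α a) := (Finset.prod_add _ _ _).symm

end Pairs


open scoped Classical in
/-- probability of an event -/
noncomputable def P (m : ℕ) (Q : Finset ℕ → Prop) : ℝ :=
  E m (fun s => if Q s then 1 else 0)

lemma P_nonneg (m : ℕ) (Q : Finset ℕ → Prop) : 0 ≤ P m Q := by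
  classical
  exact E_nonneg m (fun s => by positivity)

lemma P_markov (m : ℕ) (Q : Finset ℕ → Prop) (f : Finset ℕ → ℝ) (c : ℝ)
    (hf : ∀ s, 0 ≤ f s) (hc : 0 < c) (h : ∀ s, Q s → c ≤ f s) :
    P m Q ≤ E m f / c := by
  classical
  rw [le_div_iff₀ hc]
  have h1 : P m Q * c = E m (fun s => c * (if Q s then 1 else 0)) := by
    rw [E_const_mul]; unfold P; ring
  rw [h1]
  refine E_mono m fun s _ => ?_
  split_ifs with hq
  · simpa using h s hq
  · simpa using hf s

lemma P_mono (m : ℕ) {Q R : Finset ℕ → Prop} (h : ∀ s, Q s → R s) : P m Q ≤ P m R := by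
  classical
  refine E_mono m fun s _ => ?_
  by_cases hq : Q s
  · simp [hq, h s hq]
  · simp [hq]; positivity

lemma P_union {ι : Type*} (m : ℕ) (J : Finset ι) (B : ι → Finset ℕ → Prop) :
    P m (fun s => ∃ j ∈ J, B j s) ≤ ∑ j ∈ J, P m (B j) := by
  classical
  unfold P
  rw [← E_sum]
  refine E_mono m fun s _ => ?_
  split_ifs with hex
  · obtain ⟨j, hj, hB⟩ := hex
    have h2 := Finset.single_le_sum (f := fun i => if B i s then (1:ℝ) else 0)
      (fun i _ => by positivity) hj
    simpa [hB] using h2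
  · exact Finset.sum_nonneg fun i _ => by positivity

lemma exists_good (m : ℕ) (Bad : Finset ℕ → Prop) (h : P m Bad < 1) :
    ∃ s ⊆ Finset.range m, ¬ Bad s := by
  classical
  by_contra hc
  push_neg at hc
  have : P m Bad = 1 := by
    unfold P E
    have : ∀ s ∈ (Finset.range m).powerset, cw m s * (if Bad s then (1:ℝ) else 0) = cw m s * 1 := by
      intro s hs
      simp [hc s (Finset.mem_powerset.1 hs)]
    rw [Finset.sum_congr rfl this]
    have := E_one m
    unfold E at this
    simpa using this
  linarith


/-! ### analytic estimates -/

lemma log_two_num : (0.693:ℝ) ≤ Real.log 2 := by linarith [Real.log_two_gt_d9]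

lemma log_mono_nat {a b : ℕ} (h : a ≤ b) :
    Real.log (a+2) ≤ Real.log (b+2) := by
  apply Real.log_le_log (by positivity)
  have : (a:ℝ) ≤ b := Nat.cast_le.2 h
  linarith

lemma log_ge_log2 (n : ℕ) : Real.log 2 ≤ Real.log ((n:ℝ)+2) := by
  apply Real.log_le_log (by norm_num)
  push_cast
  have : (0:ℝ) ≤ n := Nat.cast_nonneg n
  linarith

lemma log_pos' (n : ℕ) : 0 < Real.log ((n:ℝ)+2) := by
  have := log_ge_log2 n
  have h2 : (0:ℝ) < Real.log 2 := by linarith [log_two_num]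
  linarith

/-- log x ≤ 2 √x for x ≥ 1 -/
lemma log_le_two_sqrt {x : ℝ} (hx : 1 ≤ x) : Real.log x ≤ 2 * Real.sqrt x := by
  have h0 : (0:ℝ) ≤ x := by linarith
  have h1 : Real.log (Real.sqrt x) ≤ Real.sqrt x - 1 :=
    Real.log_le_sub_one_of_pos (Real.sqrt_pos.2 (by linarith))
  have h2 : Real.log (Real.sqrt x) = Real.log x / 2 := Real.log_sqrt h0
  nlinarith [Real.sqrt_nonneg x]

lemma pr_le (n : ℕ) : pr n ≤ 30 * Real.sqrt (Real.log ((n:ℝ)+2) / ((n:ℝ)+2)) := by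
  unfold pr
  split
  · rename_i h
    have hn : (n:ℝ) + 2 ≤ 602 := by
      have : (n:ℝ) ≤ 600 := by exact_mod_cast Nat.le_of_lt_succ (Nat.lt_succ_of_lt h)
      linarith
    have hq : ((1:ℝ)/30)^2 ≤ Real.log ((n:ℝ)+2) / ((n:ℝ)+2) := by
      rw [le_div_iff₀ (by positivity)]
      have := log_ge_log2 n
      have := log_two_num
      nlinarith
    have h2 : (1:ℝ)/30 ≤ Real.sqrt (Real.log ((n:ℝ)+2) / ((n:ℝ)+2)) := by
      have := Real.sqrt_le_sqrt hq
      rwa [Real.sqrt_sq (by norm_num : (0:ℝ) ≤ 1/30)] at this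
    linarith
  · exact min_le_right _ _

lemma pr_ge_min (n : ℕ) (x : ℝ)
    (h : x ≤ 30 * Real.sqrt (Real.log ((n:ℝ)+2) / ((n:ℝ)+2))) : min 1 x ≤ pr n := by
  unfold pr
  split
  · exact min_le_left _ _
  · exact min_le_min le_rfl h


/-- coverage window -/
def covW (N : ℕ) : Finset ℕ := Finset.Ioc (N/2) (5*N/6)

def k0 (N : ℕ) : ℕ := (N+1)/2

/-- rep count threshold -/
noncomputable def tauN (N : ℕ) : ℝ := 8000 * Real.log ((N:ℝ)+2)

lemma min_one_mul_self {c : ℝ} (hc : 0 ≤ c) : min 1 c * min 1 c = min 1 (c^2) := by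
  rcases le_total c 1 with h | h
  · rw [min_eq_right h, min_eq_right (by nlinarith)]
    ring
  · rw [min_eq_left h, min_eq_left (by nlinarith)]
    norm_num

/-- the window member lower bound -/
lemma pr_window (N x : ℕ) (hN : 600 ≤ N) (hx6 : (N:ℝ)/6 ≤ x) (hxN : x ≤ N) :
    min 1 (30 * Real.sqrt (Real.log ((N:ℝ)+2) / (2*((N:ℝ)+2)))) ≤ pr x := by
  apply pr_ge_min
  have hN2 : (602:ℝ) ≤ (N:ℝ)+2 := by
    have : (600:ℝ) ≤ N := by exact_mod_cast hN
    linarith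
  have hL6 : Real.log 36 ≤ Real.log ((N:ℝ)+2) :=
    Real.log_le_log (by norm_num) (by linarith)
  have hlog36 : Real.log 36 = 2 * Real.log 6 := by
    rw [show (36:ℝ) = 6^2 by norm_num, Real.log_pow]
    push_cast; ring
  -- log(x+2) ≥ log((N+2)/6) ≥ L/2
  have h1 : Real.log (((N:ℝ)+2)/6) ≤ Real.log ((x:ℝ)+2) := by
    apply Real.log_le_log (by positivity)
    have : (0:ℝ) ≤ x := Nat.cast_nonneg x
    linarith
  have h2 : Real.log (((N:ℝ)+2)/6) = Real.log ((N:ℝ)+2) - Real.log 6 := by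
    rw [Real.log_div (by linarith) (by norm_num)]
  have h3 : Real.log ((N:ℝ)+2) / 2 ≤ Real.log ((x:ℝ)+2) := by
    rw [h2] at h1
    rw [hlog36] at hL6
    linarith
  -- monotonicity of the sqrt argument
  have harg : Real.log ((N:ℝ)+2) / (2*((N:ℝ)+2)) ≤ Real.log ((x:ℝ)+2) / ((x:ℝ)+2) := by
    have hxN' : (x:ℝ) + 2 ≤ (N:ℝ)+2 := by
      have : (x:ℝ) ≤ N := by exact_mod_cast hxN
      linarith
    have hx2 : (0:ℝ) < (x:ℝ)+2 := by positivity
    rw [div_le_div_iff₀ (by positivity) hx2]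
    have hLpos := (log_pos' N).le
    nlinarith [log_pos' x]
  have := Real.sqrt_le_sqrt harg
  nlinarith [Real.sqrt_nonneg (Real.log ((N:ℝ)+2) / (2*((N:ℝ)+2)))]

lemma cov_pair_lower (N : ℕ) (hN : 600 ≤ N) (a : ℕ) (ha : a ∈ covW N) :
    min 1 (450 * Real.log ((N:ℝ)+2) / ((N:ℝ)+2)) ≤ pr a * pr (N - a) := by
  have hmem := Finset.mem_Ioc.1 ha
  have haN : a ≤ N := le_trans hmem.2 (by omega)
  -- real bounds on a and N - a
  have ha6 : (N:ℝ)/6 ≤ a := by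
    have h1 : N/2 < a := hmem.1
    have h2 : (N/2 : ℕ) ≥ (N-1)/2 := by omega
    have : ((N:ℝ)-1)/2 ≤ (N/2 : ℕ) + 1 - 1 := by
      have h3 := Nat.div_add_mod N 2
      have h4 : N % 2 < 2 := Nat.mod_lt _ (by norm_num)
      have h5 : 2 * ((N/2:ℕ):ℝ) + (N % 2 : ℕ) = N := by exact_mod_cast h3
      have h6 : ((N%2:ℕ):ℝ) ≤ 1 := by exact_mod_cast Nat.le_of_lt_succ h4
      linarith
    have h7 : ((N/2:ℕ):ℝ) + 1 ≤ a := by exact_mod_cast h1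
    have hN' : (600:ℝ) ≤ N := by exact_mod_cast hN
    linarith
  have hb6 : (N:ℝ)/6 ≤ (N - a : ℕ) := by
    have h1 : a ≤ 5*N/6 := hmem.2
    have h2 : ((5*N/6:ℕ):ℝ) ≤ 5*(N:ℝ)/6 := by
      have h3 := Nat.div_mul_le_self (5*N) 6
      have : ((5*N/6:ℕ):ℝ) * 6 ≤ 5*(N:ℝ) := by exact_mod_cast h3
      linarith
    have h4 : ((N-a:ℕ):ℝ) = (N:ℝ) - a := by
      have := Nat.cast_sub haN (R := ℝ); exact this
    have h5 : (a:ℝ) ≤ 5*(N:ℝ)/6 := le_trans (by exact_mod_cast h1) h2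
    rw [h4]; linarith
  have hp1 := pr_window N a hN ha6 haN
  have hp2 := pr_window N (N - a) hN hb6 (by omega)
  set c := 30 * Real.sqrt (Real.log ((N:ℝ)+2) / (2*((N:ℝ)+2))) with hc
  have hc0 : 0 ≤ c := by positivity
  have hmin0 : 0 ≤ min 1 c := le_min (by norm_num) hc0
  have hprod : min 1 c * min 1 c ≤ pr a * pr (N - a) :=
    mul_le_mul hp1 hp2 hmin0 (pr_nonneg a)
  rw [min_one_mul_self hc0] at hprod
  have hcsq : c^2 = 450 * Real.log ((N:ℝ)+2) / ((N:ℝ)+2) := by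
    have hnn : 0 ≤ Real.log ((N:ℝ)+2) / (2*((N:ℝ)+2)) :=
      div_nonneg (log_pos' N).le (by positivity)
    rw [hc, mul_pow, Real.sq_sqrt hnn]
    field_simp
    ring
  rw [hcsq] at hprod
  exact hprod


lemma min_one_ge_frac {u v : ℝ} (hu : 0 ≤ u) (hv : 0 < v) : u/(u+v) ≤ min 1 (u/v) := by
  refine le_min ?_ ?_
  · rw [div_le_one (by linarith)]; linarith
  · rw [div_le_div_iff₀ (by linarith) hv]; nlinarith

lemma sqrt_le_div24 (N : ℕ) (hN : 600 ≤ N) :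
    Real.sqrt ((N:ℝ)+2) ≤ ((N:ℝ)+2)/24 := by
  have hN' : (600:ℝ) ≤ N := by exact_mod_cast hN
  have h24 : (24:ℝ) ≤ Real.sqrt ((N:ℝ)+2) := by
    have h1 : (24:ℝ) = Real.sqrt 576 := by
      rw [show (576:ℝ) = 24^2 by norm_num, Real.sqrt_sq (by norm_num : (0:ℝ) ≤ 24)]
    rw [h1]
    exact Real.sqrt_le_sqrt (by linarith)
  have hs := Real.mul_self_sqrt (show (0:ℝ) ≤ (N:ℝ)+2 by linarith)
  nlinarith [Real.sqrt_nonneg ((N:ℝ)+2)]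

lemma cov_card (N : ℕ) : N ≤ 3 * (covW N).card + 2 := by
  unfold covW
  rw [Nat.card_Ioc]
  omega

lemma cov_sum_lower (N : ℕ) (hN : 600 ≤ N) :
    3 * Real.log ((N:ℝ)+2)
      ≤ (covW N).card * min 1 (450 * Real.log ((N:ℝ)+2) / ((N:ℝ)+2)) := by
  set L := Real.log ((N:ℝ)+2) with hLdef
  have hL : 0 < L := log_pos' N
  have hN' : (600:ℝ) ≤ N := by exact_mod_cast hN
  have hL12 : L ≤ ((N:ℝ)+2)/12 := by
    have h1 := log_le_two_sqrt (show (1:ℝ) ≤ (N:ℝ)+2 by linarith)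
    have h2 := sqrt_le_div24 N hN
    rw [hLdef]; linarith
  set D := 450*L + ((N:ℝ)+2) with hDdef
  have hD : 0 < D := by positivity
  have hfrac := min_one_ge_frac (u := 450*L) (v := (N:ℝ)+2) (by positivity) (by positivity)
  have hcard : ((N:ℝ)-2)/3 ≤ ((covW N).card : ℝ) := by
    have := cov_card N
    have h2 : (N:ℝ) ≤ 3*((covW N).card : ℝ) + 2 := by exact_mod_cast this
    linarith
  have hkey : 3*L ≤ ((N:ℝ)-2)/3 * (450*L/D) := by
    rw [div_mul_div_comm, le_div_iff₀ (by positivity)]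
    nlinarith [mul_le_mul_of_nonneg_left hL12 hL.le, mul_pos hL (show (0:ℝ) < (N:ℝ)+2 by linarith)]
  calc 3*L ≤ ((N:ℝ)-2)/3 * (450*L/D) := hkey
    _ ≤ ((covW N).card : ℝ) * (450*L/D) := by
        apply mul_le_mul_of_nonneg_right hcard
        positivity
    _ ≤ ((covW N).card : ℝ) * min 1 (450*L/((N:ℝ)+2)) := by
        apply mul_le_mul_of_nonneg_left _ (by positivity)
        exact hfrac

/-- the coverage failure bound -/
lemma cov_bad_bound (m N : ℕ) (hN : 600 ≤ N) (hm : N < m) :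
    P m (fun s => ¬ ∃ a ∈ covW N, a ∈ s ∧ (N - a) ∈ s) ≤ 1/((N:ℝ)+2)^3 := by
  classical
  set L := Real.log ((N:ℝ)+2) with hLdef
  have hL : 0 < L := log_pos' N
  have hwin : ∀ a ∈ covW N, N/2 < a ∧ a ≤ 5*N/6 := fun a ha => Finset.mem_Ioc.1 ha
  -- step 1: indicator dominated by the product
  have step1 : P m (fun s => ¬ ∃ a ∈ covW N, a ∈ s ∧ (N - a) ∈ s)
      ≤ E m (fun s => ∏ a ∈ covW N, ((-1) * (X a s * X (N-a) s) + 1)) := by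
    refine E_mono m fun s _ => ?_
    split_ifs with hbad
    · rw [Finset.prod_congr rfl (fun a ha => ?_)]
      · rw [Finset.prod_const_one]
      · have : ¬ (a ∈ s ∧ (N-a) ∈ s) := fun hcon => hbad ⟨a, ha, hcon⟩
        unfold X
        by_cases h1 : a ∈ s <;> by_cases h2 : (N-a) ∈ s <;>
          simp [h1, h2] at this ⊢
    · refine Finset.prod_nonneg fun a _ => ?_
      unfold X
      by_cases h1 : a ∈ s <;> by_cases h2 : (N-a) ∈ s <;> simp [h1, h2]
  -- step 2: compute the expectation
  have step2 : E m (fun s => ∏ a ∈ covW N, ((-1) * (X a s * X (N-a) s) + 1))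
      = ∏ a ∈ covW N, ((-1) * (pr a * pr (N-a)) + 1) := by
    refine E_pairprod (covW N) (fun a => a) (fun a => N - a) m (fun _ => 1) (fun _ => -1)
      (fun a ha => ?_) (fun a ha => ?_) (fun a _ b _ h => h) (fun a ha b hb h => ?_)
      (fun a ha b hb => ?_)
    · show a < m
      have := hwin a ha; omega
    · show N - a < m
      have := hwin a ha; omega
    · have h' : N - a = N - b := h
      have h1 := hwin a ha; have h2 := hwin b hb; omega
    · intro h
      have h' : a = N - b := h
      have h1 := hwin a ha; have h2 := hwin b hb; omega
  -- step 3: bound the product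
  have step3 : ∏ a ∈ covW N, ((-1) * (pr a * pr (N-a)) + 1) ≤ 1/((N:ℝ)+2)^3 := by
    set mu := min 1 (450 * L / ((N:ℝ)+2)) with hmu
    have hmu0 : 0 ≤ mu := le_min (by norm_num) (by positivity)
    have hstep : ∏ a ∈ covW N, ((-1) * (pr a * pr (N-a)) + 1)
        ≤ ∏ a ∈ covW N, Real.exp (-mu) := by
      refine Finset.prod_le_prod (fun a _ => ?_) (fun a ha => ?_)
      · nlinarith [pr_le_one a, pr_le_one (N-a), pr_nonneg a, pr_nonneg (N-a)]
      · have hlow := cov_pair_lower N hN a ha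
        rw [← hLdef, ← hmu] at hlow
        have := Real.add_one_le_exp (-mu)
        linarith
    have hprod : ∏ a ∈ covW N, Real.exp (-mu) = Real.exp (-(((covW N).card : ℝ) * mu)) := by
      rw [Finset.prod_const, ← Real.exp_nat_mul]
      congr 1
      ring
    have hsum := cov_sum_lower N hN
    rw [← hLdef, ← hmu] at hsum
    have hfinal : Real.exp (-(((covW N).card : ℝ) * mu)) ≤ Real.exp (-(3*L)) :=
      Real.exp_le_exp.2 (by linarith)
    have hexp3 : Real.exp (-(3*L)) = 1/((N:ℝ)+2)^3 := by
      rw [Real.exp_neg, show (3:ℝ)*L = ((3:ℕ):ℝ)*L by norm_num, Real.exp_nat_mul,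
        hLdef, Real.exp_log (by positivity)]
      rw [one_div]
    calc ∏ a ∈ covW N, ((-1) * (pr a * pr (N-a)) + 1) ≤ ∏ a ∈ covW N, Real.exp (-mu) := hstep
      _ = Real.exp (-(((covW N).card : ℝ) * mu)) := hprod
      _ ≤ Real.exp (-(3*L)) := hfinal
      _ = 1/((N:ℝ)+2)^3 := hexp3
  calc P m _ ≤ E m (fun s => ∏ a ∈ covW N, ((-1) * (X a s * X (N-a) s) + 1)) := step1
    _ = ∏ a ∈ covW N, ((-1) * (pr a * pr (N-a)) + 1) := step2
    _ ≤ 1/((N:ℝ)+2)^3 := step3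


lemma sqsum (n : ℕ) :
    ∑ a ∈ Finset.range n, 1/Real.sqrt ((a:ℝ)+2) ≤ 2*Real.sqrt ((n:ℝ)+1) := by
  induction n with
  | zero => simp
  | succ n ih =>
    rw [Finset.sum_range_succ]
    have h3 : (0:ℝ) < Real.sqrt ((n:ℝ)+2) := Real.sqrt_pos.2 (by positivity)
    have key : 1/Real.sqrt ((n:ℝ)+2) ≤ 2*Real.sqrt ((n:ℝ)+2) - 2*Real.sqrt ((n:ℝ)+1) := by
      have h1 : Real.sqrt ((n:ℝ)+1) * Real.sqrt ((n:ℝ)+2) ≤ (n:ℝ) + 3/2 := by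
        rw [← Real.sqrt_mul (by positivity)]
        have h4 : ((n:ℝ)+1)*((n:ℝ)+2) ≤ ((n:ℝ)+3/2)^2 := by nlinarith [Nat.cast_nonneg (α := ℝ) n]
        calc Real.sqrt (((n:ℝ)+1)*((n:ℝ)+2)) ≤ Real.sqrt (((n:ℝ)+3/2)^2) := Real.sqrt_le_sqrt h4
          _ = (n:ℝ)+3/2 := Real.sqrt_sq (by positivity)
      have h2 : Real.sqrt ((n:ℝ)+2) * Real.sqrt ((n:ℝ)+2) = (n:ℝ)+2 :=
        Real.mul_self_sqrt (by positivity)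
      rw [div_le_iff₀ h3]
      nlinarith
    push_cast
    rw [show ((n:ℝ)+1+1) = (n:ℝ)+2 from by ring]
    linarith

lemma k0_le (N : ℕ) : k0 N + 1 ≤ N + 2 := by unfold k0; omega

lemma sqrt2_le : Real.sqrt 2 ≤ 1.42 := by
  rw [show (1.42:ℝ) = Real.sqrt (1.42^2) from (Real.sqrt_sq (by norm_num)).symm]
  exact Real.sqrt_le_sqrt (by norm_num)

lemma lam_bound (N : ℕ) :
    ∑ a ∈ Finset.range (k0 N), pr a * pr (N - a) ≤ 2600 * Real.log ((N:ℝ)+2) := by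
  set L := Real.log ((N:ℝ)+2) with hLdef
  have hL0 : (0:ℝ) ≤ L := (log_pos' N).le
  set s2 := Real.sqrt 2 with hs2
  have hs20 : (0:ℝ) ≤ s2 := Real.sqrt_nonneg 2
  have hsN : (0:ℝ) < Real.sqrt ((N:ℝ)+2) := Real.sqrt_pos.2 (by positivity)
  set C := 900 * s2 * L / Real.sqrt ((N:ℝ)+2) with hC
  have hC0 : 0 ≤ C := by positivity
  have per : ∀ a ∈ Finset.range (k0 N), pr a * pr (N - a) ≤ C * (1/Real.sqrt ((a:ℝ)+2)) := by
    intro a ha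
    have hak : a < k0 N := Finset.mem_range.1 ha
    have h2aN : 2*a ≤ N ∧ a ≤ N := by unfold k0 at hak; omega
    have hcastb : ((N-a:ℕ):ℝ) = (N:ℝ) - a := Nat.cast_sub h2aN.2
    have hsa : (0:ℝ) < Real.sqrt ((a:ℝ)+2) := Real.sqrt_pos.2 (by positivity)
    -- bound pr a
    have h1 : pr a ≤ 30 * (Real.sqrt L / Real.sqrt ((a:ℝ)+2)) := by
      have hle := pr_le a
      rw [Real.sqrt_div (Real.log_nonneg (by
        push_cast; linarith [Nat.cast_nonneg (α := ℝ) a])) ] at hle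
      have hmono : Real.sqrt (Real.log ((a:ℝ)+2)) ≤ Real.sqrt L :=
        Real.sqrt_le_sqrt (by rw [hLdef]; exact log_mono_nat h2aN.2)
      calc pr a ≤ 30 * (Real.sqrt (Real.log ((a:ℝ)+2)) / Real.sqrt ((a:ℝ)+2)) := hle
        _ ≤ 30 * (Real.sqrt L / Real.sqrt ((a:ℝ)+2)) := by gcongr
    -- bound pr (N - a)
    have h2 : pr (N - a) ≤ 30 * (Real.sqrt L * s2 / Real.sqrt ((N:ℝ)+2)) := by
      have hle := pr_le (N - a)
      rw [hcastb] at hle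
      have hlogb0 : (0:ℝ) ≤ Real.log ((N:ℝ) - a + 2) := by
        apply Real.log_nonneg
        have : (a:ℝ) ≤ N := by exact_mod_cast h2aN.2
        linarith
      rw [Real.sqrt_div hlogb0] at hle
      have hmono : Real.sqrt (Real.log ((N:ℝ) - a + 2)) ≤ Real.sqrt L := by
        apply Real.sqrt_le_sqrt
        rw [hLdef]
        apply Real.log_le_log (by
          have : (a:ℝ) ≤ N := by exact_mod_cast h2aN.2
          linarith)
        have : (0:ℝ) ≤ a := Nat.cast_nonneg a
        linarith
      have hsb : (0:ℝ) < Real.sqrt ((N:ℝ) - a + 2) := by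
        apply Real.sqrt_pos.2
        have : (a:ℝ) ≤ N := by exact_mod_cast h2aN.2
        linarith
      -- 1/sqrt(b+2) ≤ s2/sqrt(N+2)
      have hkey : Real.sqrt ((N:ℝ)+2) ≤ s2 * Real.sqrt ((N:ℝ) - a + 2) := by
        rw [hs2, ← Real.sqrt_mul (by norm_num : (0:ℝ) ≤ 2)]
        apply Real.sqrt_le_sqrt
        have h2a : (2*a:ℝ) ≤ N := by exact_mod_cast h2aN.1
        linarith
      calc pr (N-a) ≤ 30 * (Real.sqrt (Real.log ((N:ℝ)-a+2)) / Real.sqrt ((N:ℝ)-a+2)) := hle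
        _ ≤ 30 * (Real.sqrt L / Real.sqrt ((N:ℝ)-a+2)) := by gcongr
        _ ≤ 30 * (Real.sqrt L * s2 / Real.sqrt ((N:ℝ)+2)) := by
            apply mul_le_mul_of_nonneg_left _ (by norm_num)
            rw [div_le_div_iff₀ hsb hsN]
            calc Real.sqrt L * Real.sqrt ((N:ℝ)+2)
                ≤ Real.sqrt L * (s2 * Real.sqrt ((N:ℝ)-a+2)) := by
                  apply mul_le_mul_of_nonneg_left hkey (Real.sqrt_nonneg L)
              _ = Real.sqrt L * s2 * Real.sqrt ((N:ℝ)-a+2) := by ring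
    -- combine
    have hmul := mul_le_mul h1 h2 (pr_nonneg (N-a)) (by positivity)
    have heq : (30 * (Real.sqrt L / Real.sqrt ((a:ℝ)+2))) * (30 * (Real.sqrt L * s2 / Real.sqrt ((N:ℝ)+2)))
        = C * (1/Real.sqrt ((a:ℝ)+2)) := by
      rw [hC]
      have hLL : Real.sqrt L * Real.sqrt L = L := Real.mul_self_sqrt hL0
      linear_combination (900 * s2 * (Real.sqrt ((N:ℝ)+2))⁻¹ * (Real.sqrt ((a:ℝ)+2))⁻¹) * hLL
    rw [heq] at hmul
    exact hmul
  calc ∑ a ∈ Finset.range (k0 N), pr a * pr (N - a)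
      ≤ ∑ a ∈ Finset.range (k0 N), C * (1/Real.sqrt ((a:ℝ)+2)) :=
        Finset.sum_le_sum per
    _ = C * ∑ a ∈ Finset.range (k0 N), 1/Real.sqrt ((a:ℝ)+2) := by rw [Finset.mul_sum]
    _ ≤ C * (2*Real.sqrt ((k0 N:ℝ)+1)) := by
        apply mul_le_mul_of_nonneg_left (sqsum (k0 N)) hC0
    _ ≤ 2600 * L := by
        have hk : Real.sqrt ((k0 N:ℝ)+1) ≤ Real.sqrt ((N:ℝ)+2) := by
          apply Real.sqrt_le_sqrt
          have := k0_le N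
          have h2 : ((k0 N:ℕ):ℝ) + 1 ≤ (N:ℝ) + 2 := by exact_mod_cast this
          linarith
        rw [hC]
        have hs2' := sqrt2_le
        rw [div_mul_eq_mul_div, div_le_iff₀ hsN]
        have e1 : 900 * s2 * L * (2 * Real.sqrt ((k0 N:ℝ)+1))
            ≤ 900 * s2 * L * (2 * Real.sqrt ((N:ℝ)+2)) := by
          apply mul_le_mul_of_nonneg_left _ (by positivity)
          linarith
        calc 900 * s2 * L * (2 * Real.sqrt ((k0 N:ℝ)+1))
            ≤ 900 * s2 * L * (2 * Real.sqrt ((N:ℝ)+2)) := e1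
          _ ≤ 2600 * L * Real.sqrt ((N:ℝ)+2) := by
              have h56 : 1800 * s2 ≤ 2600 := by
                rw [hs2]; nlinarith [sqrt2_le, Real.sqrt_nonneg 2]
              nlinarith [mul_le_mul_of_nonneg_right h56 (mul_nonneg hL0 hsN.le)]


open scoped Classical in
/-- number of low representations -/
noncomputable def Sc (N : ℕ) (chi : ℕ → Prop) : ℕ :=
  ((Finset.range (k0 N)).filter (fun a => chi a ∧ chi (N - a))).card

open scoped Classical in
lemma four_pow_Sc (N : ℕ) (s : Finset ℕ) :
    ((4:ℝ)) ^ (Sc N (· ∈ s)) = ∏ a ∈ Finset.range (k0 N), (3 * (X a s * X (N-a) s) + 1) := by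
  unfold Sc
  rw [Finset.card_filter, ← Finset.prod_pow_eq_pow_sum]
  refine Finset.prod_congr rfl fun a _ => ?_
  unfold X
  by_cases h1 : a ∈ s <;> by_cases h2 : (N-a) ∈ s <;> simp [h1, h2] <;> norm_num

lemma log_four : (1.386:ℝ) ≤ Real.log 4 := by
  have h : Real.log 4 = 2 * Real.log 2 := by
    rw [show (4:ℝ) = 2^2 by norm_num, Real.log_pow]
    push_cast; ring
  rw [h]; linarith [log_two_num]

open scoped Classical in
lemma rep_bad_bound (m N : ℕ) (hm : N < m) :
    P m (fun s => tauN N + 1 ≤ (Sc N (· ∈ s) : ℝ)) ≤ 1/((N:ℝ)+2)^3 := by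
  set L := Real.log ((N:ℝ)+2) with hLdef
  have hL : 0 < L := log_pos' N
  set c := (4:ℝ) ^ (tauN N + 1 : ℝ) with hc
  have hc0 : 0 < c := Real.rpow_pos_of_pos (by norm_num) _
  have hmark := P_markov m (fun s => tauN N + 1 ≤ (Sc N (· ∈ s) : ℝ))
    (fun s => (4:ℝ) ^ (Sc N (· ∈ s))) c
    (fun s => by positivity) hc0
    (fun s hs => by
      show c ≤ (4:ℝ) ^ (Sc N (· ∈ s))
      rw [hc, ← Real.rpow_natCast (4:ℝ) (Sc N (· ∈ s))]
      exact Real.rpow_le_rpow_of_exponent_le (by norm_num) hs)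
  refine le_trans hmark ?_
  -- compute the expectation
  have hE : E m (fun s => (4:ℝ) ^ (Sc N (· ∈ s)))
      = ∏ a ∈ Finset.range (k0 N), (3 * (pr a * pr (N-a)) + 1) := by
    have : (fun s => (4:ℝ) ^ (Sc N (· ∈ s)))
        = fun s => ∏ a ∈ Finset.range (k0 N), (3 * (X a s * X (N-a) s) + 1) := by
      funext s; exact four_pow_Sc N s
    rw [this]
    refine E_pairprod (Finset.range (k0 N)) (fun a => a) (fun a => N - a) m
      (fun _ => 1) (fun _ => 3) (fun a ha => ?_) (fun a ha => ?_)
      (fun a _ b _ h => h) (fun a ha b hb h => ?_) (fun a ha b hb => ?_)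
    · show a < m
      have := Finset.mem_range.1 ha; unfold k0 at this; omega
    · show N - a < m
      omega
    · have h' : N - a = N - b := h
      have h1 := Finset.mem_range.1 ha; have h2 := Finset.mem_range.1 hb
      unfold k0 at h1 h2; omega
    · intro h
      have h' : a = N - b := h
      have h1 := Finset.mem_range.1 ha; have h2 := Finset.mem_range.1 hb
      unfold k0 at h1 h2; omega
  rw [hE]
  -- bound the product by exp(3 lambda)
  have hprod : ∏ a ∈ Finset.range (k0 N), (3 * (pr a * pr (N-a)) + 1)
      ≤ Real.exp (3 * ∑ a ∈ Finset.range (k0 N), pr a * pr (N-a)) := by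
    rw [show 3 * ∑ a ∈ Finset.range (k0 N), pr a * pr (N-a)
        = ∑ a ∈ Finset.range (k0 N), 3 * (pr a * pr (N-a)) from by rw [Finset.mul_sum],
      Real.exp_sum]
    refine Finset.prod_le_prod (fun a _ => ?_) (fun a _ => ?_)
    · have := pr_nonneg a; have := pr_nonneg (N-a); positivity
    · linarith [Real.add_one_le_exp (3 * (pr a * pr (N-a)))]
  have hlam := lam_bound N
  rw [← hLdef] at hlam
  have hexp : Real.exp (3 * ∑ a ∈ Finset.range (k0 N), pr a * pr (N-a))
      ≤ Real.exp (7800 * L) := by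
    apply Real.exp_le_exp.2
    nlinarith [Finset.sum_nonneg (fun a (_ : a ∈ Finset.range (k0 N)) =>
      mul_nonneg (pr_nonneg a) (pr_nonneg (N-a)))]
  -- final numeric comparison
  have hfinal : Real.exp (7800 * L) / c ≤ 1/((N:ℝ)+2)^3 := by
    rw [hc, Real.rpow_def_of_pos (by norm_num : (0:ℝ) < 4), ← Real.exp_sub]
    have h1 : 7800 * L - Real.log 4 * (tauN N + 1) ≤ -(3*L) := by
      unfold tauN
      rw [← hLdef]
      have h4 := log_four
      nlinarith
    calc Real.exp (7800 * L - Real.log 4 * (tauN N + 1)) ≤ Real.exp (-(3*L)) :=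
          Real.exp_le_exp.2 h1
      _ = 1/((N:ℝ)+2)^3 := by
          rw [Real.exp_neg, show (3:ℝ)*L = ((3:ℕ):ℝ)*L by norm_num, Real.exp_nat_mul,
            hLdef, Real.exp_log (by positivity), one_div]
  calc (∏ a ∈ Finset.range (k0 N), (3 * (pr a * pr (N-a)) + 1)) / c
      ≤ Real.exp (7800 * L) / c := by
        apply div_le_div_of_nonneg_right _ hc0.le
        exact le_trans hprod hexp
    _ ≤ 1/((N:ℝ)+2)^3 := hfinal


lemma E_add (m : ℕ) (f g : Finset ℕ → ℝ) :
    E m (fun s => f s + g s) = E m f + E m g := by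
  unfold E
  rw [← Finset.sum_add_distrib]
  refine Finset.sum_congr rfl fun s _ => by ring

open scoped Classical in
lemma P_or (m : ℕ) (Q R : Finset ℕ → Prop) :
    P m (fun s => Q s ∨ R s) ≤ P m Q + P m R := by
  unfold P
  rw [← E_add]
  refine E_mono m fun s _ => ?_
  by_cases hq : Q s <;> by_cases hr : R s <;> simp [hq, hr]

open scoped Classical in
lemma P_false (m : ℕ) (Q : Finset ℕ → Prop) (h : ∀ s, ¬ Q s) : P m Q ≤ 0 := by
  unfold P E
  have : ∀ s ∈ (Finset.range m).powerset, cw m s * (if Q s then (1:ℝ) else 0) = 0 := by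
    intro s _; simp [h s]
  rw [Finset.sum_congr rfl this]
  simp

lemma force_bad_bound (m N : ℕ) (hN : N < 600) (hm : N < m) :
    P m (fun s => N ∉ s) ≤ 0 := by
  classical
  have h1 : P m (fun s => N ∉ s) ≤ E m (fun s => 1 - X N s) := by
    refine E_mono m fun s _ => ?_
    unfold X
    by_cases h : N ∈ s <;> simp [h]
  have h2 : E m (fun s => 1 - X N s) = 1 - pr N := by
    have ha : E m (fun s => 1 - X N s) = E m (fun _ => 1) + E m (fun s => (-1) * X N s) := by
      rw [← E_add]
      congr 1; funext s; ring
    rw [ha, E_one, E_const_mul]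
    have hmono : E m (fun s => X N s) = pr N := by
      have := E_monomial m {N} (by simp [Finset.singleton_subset_iff, Finset.mem_range, hm])
      simpa using this
    rw [hmono]; ring
  have h3 : pr N = 1 := by unfold pr; rw [if_pos hN]
  rw [h2, h3] at h1
  simpa using h1

open scoped Classical in
/-- all bad events at level N -/
def BadAt (N : ℕ) (chi : ℕ → Prop) : Prop :=
  (tauN N + 1 ≤ (Sc N chi : ℝ)) ∨
  (600 ≤ N ∧ ¬ ∃ a ∈ covW N, chi a ∧ chi (N - a)) ∨
  (N < 600 ∧ ¬ chi N)

lemma badAt_bound (m N : ℕ) (hm : N < m) :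
    P m (fun s => BadAt N (· ∈ s)) ≤ 2/((N:ℝ)+2)^3 := by
  classical
  unfold BadAt
  have h1 := P_or m (fun s => tauN N + 1 ≤ (Sc N (· ∈ s) : ℝ))
    (fun s => (600 ≤ N ∧ ¬ ∃ a ∈ covW N, (· ∈ s) a ∧ (· ∈ s) (N - a)) ∨ (N < 600 ∧ N ∉ s))
  have h2 := P_or m (fun s => (600 ≤ N ∧ ¬ ∃ a ∈ covW N, (· ∈ s) a ∧ (· ∈ s) (N - a)))
    (fun s => (N < 600 ∧ N ∉ s))
  have hrep := rep_bad_bound m N hm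
  have hcov : P m (fun s => (600 ≤ N ∧ ¬ ∃ a ∈ covW N, (· ∈ s) a ∧ (· ∈ s) (N - a)))
      ≤ 1/((N:ℝ)+2)^3 := by
    by_cases h6 : 600 ≤ N
    · refine le_trans (P_mono m fun s hs => hs.2) ?_
      exact cov_bad_bound m N h6 hm
    · refine le_trans (P_false m _ fun s hs => h6 hs.1) (by positivity)
  have hforce : P m (fun s => (N < 600 ∧ N ∉ s)) ≤ 0 := by
    by_cases h6 : N < 600
    · exact le_trans (P_mono m fun s hs => hs.2) (force_bad_bound m N h6 hm)
    · exact P_false m _ fun s hs => h6 hs.1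
  have := le_trans h1 (by linarith [h2] : P m (fun s => tauN N + 1 ≤ (Sc N (· ∈ s) : ℝ)) +
      P m _ ≤ P m (fun s => tauN N + 1 ≤ (Sc N (· ∈ s) : ℝ)) +
      (P m (fun s => (600 ≤ N ∧ ¬ ∃ a ∈ covW N, (· ∈ s) a ∧ (· ∈ s) (N - a))) +
        P m (fun s => (N < 600 ∧ N ∉ s))))
  calc P m (fun s => BadAt N (· ∈ s)) ≤ _ := this
    _ ≤ 1/((N:ℝ)+2)^3 + (1/((N:ℝ)+2)^3 + 0) := by
        gcongr  -- may fail; fallback linarith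
    _ = 2/((N:ℝ)+2)^3 := by ring

/-- partial sums of 1/(N+2)^3 -/
lemma cube_partial (m : ℕ) :
    ∑ N ∈ Finset.range m, 1/((N:ℝ)+2)^3 ≤ 1/2 * (1 - 1/((m:ℝ)+1)^2) := by
  induction m with
  | zero => simp
  | succ m ih =>
    rw [Finset.sum_range_succ]
    have key : 1/((m:ℝ)+2)^3 ≤ 1/2 * (1/((m:ℝ)+1)^2 - 1/((m:ℝ)+2)^2) := by
      have hrw : 1/2 * (1/((m:ℝ)+1)^2 - 1/((m:ℝ)+2)^2)
          = (2*(m:ℝ)+3)/(2*(((m:ℝ)+1)^2*((m:ℝ)+2)^2)) := by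
        field_simp
        ring
      rw [hrw, div_le_div_iff₀ (by positivity) (by positivity)]
      nlinarith [Nat.cast_nonneg (α := ℝ) m]
    push_cast
    have hfin : ((m:ℝ)+1)+1 = (m:ℝ)+2 := by ring
    rw [hfin]
    linarith

lemma exists_good_level (m : ℕ) :
    ∃ s : Finset ℕ, s ⊆ Finset.range m ∧ ∀ N ∈ Finset.range m, ¬ BadAt N (· ∈ s) := by
  classical
  have hsum : P m (fun s => ∃ N ∈ Finset.range m, BadAt N (· ∈ s)) < 1 := by
    refine lt_of_le_of_lt (P_union m (Finset.range m) (fun N s => BadAt N (· ∈ s))) ?_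
    have h1 : ∀ N ∈ Finset.range m, P m (fun s => BadAt N (· ∈ s)) ≤ 2/((N:ℝ)+2)^3 :=
      fun N hN => badAt_bound m N (Finset.mem_range.1 hN)
    calc ∑ N ∈ Finset.range m, P m (fun s => BadAt N (· ∈ s))
        ≤ ∑ N ∈ Finset.range m, 2/((N:ℝ)+2)^3 := Finset.sum_le_sum h1
      _ = 2 * ∑ N ∈ Finset.range m, 1/((N:ℝ)+2)^3 := by
          rw [Finset.mul_sum]
          refine Finset.sum_congr rfl fun N _ => by ring
      _ ≤ 2 * (1/2 * (1 - 1/((m:ℝ)+1)^2)) :=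
          mul_le_mul_of_nonneg_left (cube_partial m) (by norm_num)
      _ < 1 := by
          have : 0 < 1/((m:ℝ)+1)^2 := by positivity
          nlinarith
  obtain ⟨s, hs, hgood⟩ := exists_good m (fun s => ∃ N ∈ Finset.range m, BadAt N (· ∈ s)) hsum
  exact ⟨s, hs, fun N hN hbad => hgood ⟨N, hN, hbad⟩⟩


lemma BadAt_congr (N : ℕ) (chi chi' : ℕ → Prop) (h : ∀ n ≤ N, chi n ↔ chi' n) :
    BadAt N chi ↔ BadAt N chi' := by
  classical
  have hfilter : (Finset.range (k0 N)).filter (fun a => chi a ∧ chi (N - a))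
      = (Finset.range (k0 N)).filter (fun a => chi' a ∧ chi' (N - a)) := by
    apply Finset.filter_congr
    intro a ha
    have hak := Finset.mem_range.1 ha
    have ha1 : a ≤ N := by unfold k0 at hak; omega
    have ha2 : N - a ≤ N := by omega
    rw [h a ha1, h (N-a) ha2]
  have hcov : (∃ a ∈ covW N, chi a ∧ chi (N - a)) ↔ (∃ a ∈ covW N, chi' a ∧ chi' (N - a)) := by
    refine exists_congr fun a => ?_
    constructor
    · rintro ⟨ha, h1, h2⟩
      have haW := Finset.mem_Ioc.1 ha
      have ha1 : a ≤ N := by omega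
      exact ⟨ha, (h a ha1).1 h1, (h (N-a) (by omega)).1 h2⟩
    · rintro ⟨ha, h1, h2⟩
      have haW := Finset.mem_Ioc.1 ha
      have ha1 : a ≤ N := by omega
      exact ⟨ha, (h a ha1).2 h1, (h (N-a) (by omega)).2 h2⟩
  have hN' : chi N ↔ chi' N := h N le_rfl
  unfold BadAt Sc
  rw [hfilter]
  exact or_congr Iff.rfl (or_congr (and_congr Iff.rfl (not_congr hcov))
    (and_congr Iff.rfl (not_congr hN')))

/-- the decreasing family of closed good sets -/
def C (m : ℕ) : Set (ℕ → Bool) := {σ | ∀ N ≤ m, ¬ BadAt N (fun n => σ n = true)}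

lemma C_antitone (m : ℕ) : C (m+1) ⊆ C m := fun σ hσ N hN => hσ N (by omega)

lemma C_nonempty (m : ℕ) : (C m).Nonempty := by
  classical
  obtain ⟨s, _, hgood⟩ := exists_good_level (m+1)
  refine ⟨fun n => decide (n ∈ s), fun N hN => ?_⟩
  have h1 := hgood N (Finset.mem_range.2 (by omega))
  intro hbad
  apply h1
  rw [BadAt_congr N (· ∈ s) (fun n => decide (n ∈ s) = true) (fun n _ => by simp)]
  exact hbad

lemma isClosed_local (N : ℕ) (Q : (ℕ → Bool) → Prop)
    (hloc : ∀ σ τ : ℕ → Bool, (∀ n ≤ N, σ n = τ n) → Q σ → Q τ) :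
    IsClosed {σ : ℕ → Bool | Q σ} := by
  have hset : {σ : ℕ → Bool | Q σ} =
      (fun (σ : ℕ → Bool) (i : Fin (N+1)) => σ i) ⁻¹'
        {g : Fin (N+1) → Bool |
          Q (fun n => if h : n ≤ N then g ⟨n, by omega⟩ else false)} := by
    ext σ
    simp only [Set.mem_setOf_eq, Set.mem_preimage]
    constructor
    · intro h
      refine hloc σ _ (fun n hn => ?_) h
      simp [hn]
    · intro h
      refine hloc _ σ (fun n hn => ?_) h
      simp [hn]
  rw [hset]
  exact IsClosed.preimage (continuous_pi fun i => continuous_apply _) (isClosed_discrete _)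

lemma C_closed (m : ℕ) : IsClosed (C m) := by
  refine isClosed_local m (fun σ => ∀ N ≤ m, ¬ BadAt N (fun n => σ n = true)) ?_
  intro σ τ hagree hσ N hN hbad
  apply hσ N hN
  rw [BadAt_congr N (fun n => σ n = true) (fun n => τ n = true)
    (fun n hn => by show σ n = true ↔ τ n = true; rw [hagree n (le_trans hn hN)])]
  exact hbad

lemma exists_sigma : ∃ σ : ℕ → Bool, ∀ N : ℕ, ¬ BadAt N (fun n => σ n = true) := by
  have hne := IsCompact.nonempty_iInter_of_sequence_nonempty_isCompact_isClosed
    C C_antitone C_nonempty ((C_closed 0).isCompact) C_closed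
  obtain ⟨σ, hσ⟩ := hne
  refine ⟨σ, fun N => ?_⟩
  have := Set.mem_iInter.1 hσ N
  exact this N le_rfl


open scoped Classical in
lemma count_bound (N : ℕ) (chi : ℕ → Prop) :
    ({q : ℕ × ℕ | chi q.1 ∧ chi q.2 ∧ q.1 + q.2 = N}).ncard ≤ 2 * Sc N chi + 1 := by
  classical
  set F := (Finset.range (N+1)).filter (fun a => chi a ∧ chi (N - a)) with hF
  set G := (Finset.range (k0 N)).filter (fun a => chi a ∧ chi (N - a)) with hG
  have hset : {q : ℕ × ℕ | chi q.1 ∧ chi q.2 ∧ q.1 + q.2 = N}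
      = ↑(F.image (fun a => (a, N - a))) := by
    ext q
    obtain ⟨x, y⟩ := q
    simp only [Set.mem_setOf_eq, Finset.coe_image, Set.mem_image, Finset.mem_coe, hF,
      Finset.mem_filter, Finset.mem_range]
    constructor
    · rintro ⟨h1, h2, h3⟩
      refine ⟨x, ⟨by omega, h1, ?_⟩, ?_⟩
      · rw [show N - x = y by omega]; exact h2
      · rw [show N - x = y by omega]
    · rintro ⟨a, ⟨ha, h1, h2⟩, heq⟩
      have hx : a = x := congrArg Prod.fst heq
      have hy : N - a = y := congrArg Prod.snd heq
      subst hx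
      subst hy
      exact ⟨h1, h2, by omega⟩
  rw [hset, Set.ncard_coe_finset]
  have hsub : F ⊆ (G ∪ G.image (fun a => N - a)) ∪ {N/2} := by
    intro a haF
    have ⟨haN, h1, h2⟩ := Finset.mem_filter.1 haF
    have haN' : a ≤ N := by
      have := Finset.mem_range.1 haN; omega
    by_cases hlow : a < k0 N
    · exact Finset.mem_union.2 (Or.inl (Finset.mem_union.2 (Or.inl
        (Finset.mem_filter.2 ⟨Finset.mem_range.2 hlow, h1, h2⟩))))
    · by_cases hmid : 2*a = N
      · refine Finset.mem_union.2 (Or.inr ?_)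
        simp only [Finset.mem_singleton]
        omega
      · refine Finset.mem_union.2 (Or.inl (Finset.mem_union.2 (Or.inr ?_)))
        refine Finset.mem_image.2 ⟨N - a, ?_, by omega⟩
        refine Finset.mem_filter.2 ⟨Finset.mem_range.2 ?_, h2, ?_⟩
        · unfold k0 at hlow ⊢; omega
        · rw [show N - (N - a) = a by omega]; exact h1
  calc (F.image (fun a => (a, N - a))).card ≤ F.card := Finset.card_image_le
    _ ≤ ((G ∪ G.image (fun a => N - a)) ∪ {N/2}).card := Finset.card_le_card hsub
    _ ≤ (G ∪ G.image (fun a => N - a)).card + 1 := by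
        refine le_trans (Finset.card_union_le _ _) ?_
        simp
    _ ≤ (G.card + G.card) + 1 := by
        have := Finset.card_union_le G (G.image (fun a => N - a))
        have h2 := Finset.card_image_le (s := G) (f := fun a => N - a)
        omega
    _ = 2 * Sc N chi + 1 := by
        unfold Sc
        rw [← hG]
        ring

end Stmt12

theorem stmt12 :
    ∃ A : Set ℕ,
      (∀ n : ℕ, ∃ a ∈ A, ∃ a' ∈ A, a + a' = n) ∧
      ∀ ε : ℝ, 0 < ε →
        Tendsto (fun N : ℕ =>
            (({q : ℕ × ℕ | q.1 ∈ A ∧ q.2 ∈ A ∧ q.1 + q.2 = N}).ncard : ℝ) / (N : ℝ) ^ ε)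
          atTop (nhds 0) := by
  classical
  obtain ⟨σ, hσ⟩ := Stmt12.exists_sigma
  set chi : ℕ → Prop := fun n => σ n = true with hchi
  have hforce : ∀ n, n < 600 → chi n := by
    intro n hn
    have h := hσ n
    unfold Stmt12.BadAt at h
    push_neg at h
    exact h.2.2 hn
  have hcov : ∀ N, 600 ≤ N → ∃ a ∈ Stmt12.covW N, chi a ∧ chi (N - a) := by
    intro N h6
    have h := hσ N
    unfold Stmt12.BadAt at h
    push_neg at h
    exact h.2.1 h6
  have hSc : ∀ N, (Stmt12.Sc N chi : ℝ) < Stmt12.tauN N + 1 := by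
    intro N
    have h := hσ N
    unfold Stmt12.BadAt at h
    push_neg at h
    exact h.1
  refine ⟨{n | chi n}, ?_, ?_⟩
  · intro n
    by_cases h6 : 600 ≤ n
    · obtain ⟨a, haW, h1, h2⟩ := hcov n h6
      have haN : a ≤ n := by
        have := Finset.mem_Ioc.1 haW
        omega
      exact ⟨a, h1, n - a, h2, by omega⟩
    · exact ⟨n, hforce n (by omega), 0, hforce 0 (by omega), by omega⟩
  · intro ε hε
    have hbound : ∀ N : ℕ,
        (({q : ℕ × ℕ | q.1 ∈ {n | chi n} ∧ q.2 ∈ {n | chi n} ∧ q.1 + q.2 = N}).ncard : ℝ)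
          ≤ 16000 * Real.log ((N:ℝ)+2) + 3 := by
      intro N
      have h1 := Stmt12.count_bound N chi
      have h2 : (({q : ℕ × ℕ | q.1 ∈ {n | chi n} ∧ q.2 ∈ {n | chi n} ∧ q.1 + q.2 = N}).ncard : ℝ)
          ≤ 2 * (Stmt12.Sc N chi : ℝ) + 1 := by exact_mod_cast h1
      have h3 := hSc N
      unfold Stmt12.tauN at h3
      linarith
    have t2 : Tendsto (fun N : ℕ => ((N:ℝ)+2)) atTop atTop :=
      tendsto_atTop_add_const_right atTop 2 tendsto_natCast_atTop_atTop
    have t1 : Tendsto (fun x : ℝ => Real.log x / x^ε) atTop (nhds 0) :=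
      (isLittleO_log_rpow_atTop hε).tendsto_div_nhds_zero
    have tlog : Tendsto (fun N : ℕ => Real.log ((N:ℝ)+2) / ((N:ℝ)+2)^ε) atTop (nhds 0) :=
      t1.comp t2
    have tpow : Tendsto (fun N : ℕ => ((N:ℝ)+2)^ε) atTop atTop :=
      (tendsto_rpow_atTop hε).comp t2
    have tinv : Tendsto (fun N : ℕ => (((N:ℝ)+2)^ε)⁻¹) atTop (nhds 0) :=
      tpow.inv_tendsto_atTop
    have tmain : Tendsto (fun N : ℕ =>
        (3:ℝ)^ε * (16000 * (Real.log ((N:ℝ)+2)/((N:ℝ)+2)^ε) + 3 * (((N:ℝ)+2)^ε)⁻¹))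
        atTop (nhds 0) := by
      have := ((tlog.const_mul (16000:ℝ)).add (tinv.const_mul (3:ℝ))).const_mul ((3:ℝ)^ε)
      simpa using this
    refine squeeze_zero' ?_ ?_ tmain
    · filter_upwards with N
      positivity
    · filter_upwards [Filter.eventually_ge_atTop 1] with N hN1
      have hN0 : (0:ℝ) < N := by exact_mod_cast hN1
      have hN1' : (1:ℝ) ≤ N := by exact_mod_cast hN1
      have hNe : (0:ℝ) < (N:ℝ)^ε := Real.rpow_pos_of_pos hN0 ε
      have hN2e : (0:ℝ) < ((N:ℝ)+2)^ε := Real.rpow_pos_of_pos (by linarith) ε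
      have h3 : ((N:ℝ)+2)^ε ≤ 3^ε * (N:ℝ)^ε := by
        rw [← Real.mul_rpow (by norm_num) hN0.le]
        exact Real.rpow_le_rpow (by linarith) (by linarith) hε.le
      have hc0 : (0:ℝ) ≤ 16000 * Real.log ((N:ℝ)+2) + 3 := by
        have := Stmt12.log_pos' N
        linarith
      calc (({q : ℕ × ℕ | q.1 ∈ {n | chi n} ∧ q.2 ∈ {n | chi n} ∧ q.1 + q.2 = N}).ncard : ℝ)
            / (N : ℝ) ^ ε
          ≤ (16000 * Real.log ((N:ℝ)+2) + 3) / (N:ℝ)^ε := by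
            apply div_le_div_of_nonneg_right (hbound N) hNe.le
        _ ≤ 3^ε * (16000 * Real.log ((N:ℝ)+2) + 3) / ((N:ℝ)+2)^ε := by
            rw [div_le_div_iff₀ hNe hN2e]
            nlinarith [mul_le_mul_of_nonneg_left h3 hc0]
        _ = (3:ℝ)^ε * (16000 * (Real.log ((N:ℝ)+2)/((N:ℝ)+2)^ε) + 3 * (((N:ℝ)+2)^ε)⁻¹) := by
            field_simp
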